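/- Let $z \in \mathbb{C}$ and let $\phi_0(z)$ be the $4\times 4$ matrix with rows $(-z, iz, -iz, z)$, $(-z^3, -iz^3, iz^3, z^3)$, $(e^{-z}, e^{iz}, e^{-iz}, e^{z})$, $(z^2 e^{-z}, -z^2 e^{iz}, -z^2 e^{-iz}, z^2 e^{z})$. Then $\det \phi_0(z) = 16 i z^6 \cos z \cos(iz)$. -/

import Mathlib

open Complex Matrix

theorem stmt_1 (z : ℂ) :
    Matrix.det !![-z, I * z, -(I * z), z;
                  -z ^ 3, -(I * z ^ 3), I * z ^ 3, z ^ 3;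
                  Complex.exp (-z), Complex.exp (I * z), Complex.exp (-(I * z)), Complex.exp z;
                  z ^ 2 * Complex.exp (-z), -(z ^ 2) * Complex.exp (I * z),
                    -(z ^ 2) * Complex.exp (-(I * z)), z ^ 2 * Complex.exp z]
      = 16 * I * z ^ 6 * Complex.cos z * Complex.cos (I * z) := by
  have h1 : Complex.cos z = (Complex.exp (I * z) + Complex.exp (-(I * z))) / 2 := by
    rw [Complex.cos]; ring_nf
  have h2 : Complex.cos (I * z) = (Complex.exp z + Complex.exp (-z)) / 2 := by
    rw [Complex.cos]
    have : I * z * I = -z := by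
      have := Complex.I_mul_I; ring_nf; rw [Complex.I_sq]; ring
    rw [this]
    have : -(I * z) * I = z := by ring_nf; rw [Complex.I_sq]; ring
    rw [this]; ring
  rw [h1, h2]
  simp [Matrix.det_succ_row_zero, Fin.sum_univ_succ, Fin.succAbove]
  ring_nf
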